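/- In the good/bad/ugly setting, for every i with 0 ≤ i ≤ m one has ‖good^i‖² + Σ_{j=1}^{i} ‖bad^j‖² = 1. -/

import Mathlib

theorem welded_tree_good_sq_add_bad_sq_eq_one
    {{H : Type*}} [NormedAddCommGroup H] [InnerProductSpace ℂ H]
    (m : ℕ) (C : ℕ → (H ≃ₗᵢ[ℂ] H))
    (P : H →L[ℂ] H)
    (hPidem : ∀ x : H, P (P x) = P x)
    (hPsa : ∀ x y : H, (inner ℂ (P x) y : ℂ) = inner ℂ x (P y))
    (ψ0 : H) (hψ0 : ‖ψ0‖ = 1) (hψ0bad : P ψ0 = 0)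
    (A good bad ugly : ℕ → H)
    (hA0 : A 0 = ψ0)
    (hA : ∀ i : ℕ, 1 ≤ i → i ≤ m → A i = C i (A (i - 1)))
    (hgood0 : good 0 = ψ0) (hbad0 : bad 0 = 0) (hugly0 : ugly 0 = 0)
    (hgood : ∀ i : ℕ, 1 ≤ i → i ≤ m →
      good i = C i (good (i - 1)) - P (C i (good (i - 1))))
    (hbad : ∀ i : ℕ, 1 ≤ i → i ≤ m → bad i = P (C i (good (i - 1))))
    (hugly : ∀ i : ℕ, 1 ≤ i → i ≤ m → ugly i = bad i + C i (ugly (i - 1))) :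
    ∀ i : ℕ, i ≤ m → ‖good i‖ ^ 2 + ∑ j ∈ Finset.Icc 1 i, ‖bad j‖ ^ 2 = 1 := by
  have key : ∀ x : H, ‖x - P x‖ ^ 2 + ‖P x‖ ^ 2 = ‖x‖ ^ 2 := by
    intro x
    have horth : (inner ℂ (x - P x) (P x) : ℂ) = 0 := by
      have h1 : (inner ℂ (P x) (x - P x) : ℂ) = 0 := by
        rw [hPsa, map_sub, hPidem, sub_self, inner_zero_right]
      calc (inner ℂ (x - P x) (P x) : ℂ) = starRingEnd ℂ (inner ℂ (P x) (x - P x)) := by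
            rw [inner_conj_symm]
        _ = 0 := by rw [h1, map_zero]
    have := norm_add_sq_eq_norm_sq_add_norm_sq_of_inner_eq_zero (x - P x) (P x) horth
    rw [sub_add_cancel] at this
    simp only [pow_two]
    linarith
  intro i
  induction i with
  | zero =>
    intro _
    simp [hgood0, hψ0]
  | succ n ih =>
    intro hle
    have hn : n ≤ m := Nat.le_of_succ_le hle
    have h1 : 1 ≤ n + 1 := Nat.le_add_left 1 n
    have hg := hgood (n + 1) h1 hle
    have hb := hbad (n + 1) h1 hle
    simp only [Nat.add_sub_cancel] at hg hb
    have hsum : ∑ j ∈ Finset.Icc 1 (n + 1), ‖bad j‖ ^ 2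
        = (∑ j ∈ Finset.Icc 1 n, ‖bad j‖ ^ 2) + ‖bad (n + 1)‖ ^ 2 := by
      rw [← Finset.sum_Icc_succ_top h1]
    have hstep : ‖good (n + 1)‖ ^ 2 + ‖bad (n + 1)‖ ^ 2 = ‖good n‖ ^ 2 := by
      rw [hg, hb, key, (C (n + 1)).norm_map]
    have := ih hn
    rw [hsum]
    linarith
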